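/- Let G be a finite 3-group such that G' = [G,G] is cyclic of order 3^μ and G/(G')³ is a nonabelian group of order 27. Then μ = 1, so |G| = 27. -/

import Mathlib

open scoped commutatorElement

/-- If `G` is a finite 3-group whose commutator subgroup is cyclic of order `3^μ`,
and `G/(G')³` is a nonabelian group of order 27, then `μ = 1` and `|G| = 27`. -/
theorem stmt_4 {G : Type*} [Group G] [Finite G] (μ : ℕ)
    (h3 : IsPGroup 3 G)
    (hcyc : IsCyclic (commutator G))
    (hcard : Nat.card (commutator G) = 3 ^ μ)
    (K : Subgroup G)
    (hK : K = Subgroup.closure ((fun g => g ^ 3) '' (commutator G : Set G)))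
    [K.Normal]
    (hcard27 : Nat.card (G ⧸ K) = 27)
    (hnonab : ¬ ∀ x y : G ⧸ K, x * y = y * x) :
    μ = 1 ∧ Nat.card G = 27 := by
  haveI : Fact (Nat.Prime 3) := ⟨by norm_num⟩
  haveI hGnorm : (commutator G).Normal := by rw [commutator_def]; infer_instance
  -- Fermat: k^(3^e) ≡ k mod 3
  have fermat : ∀ (k : ℤ) (e : ℕ), (3:ℤ) ∣ k ^ 3 ^ e - k := by
    intro k e
    induction e with
    | zero => simp
    | succ e ih =>
      have h1 : (3:ℤ) ∣ (k ^ 3 ^ e) ^ 3 - k ^ 3 ^ e := by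
        have h0 : (((k ^ 3 ^ e) ^ 3 - k ^ 3 ^ e : ℤ) : ZMod 3) = 0 := by
          push_cast
          rw [ZMod.pow_card]
          ring
        exact_mod_cast (ZMod.intCast_zmod_eq_zero_iff_dvd _ 3).mp h0
      have h2 : k ^ 3 ^ (e + 1) - k = ((k ^ 3 ^ e) ^ 3 - k ^ 3 ^ e) + (k ^ 3 ^ e - k) := by
        rw [pow_succ, pow_mul]; ring
      rw [h2]
      exact dvd_add h1 ih
  -- μ = 0 case : G abelian, contradiction
  rcases Nat.eq_zero_or_pos μ with hμ0 | hμpos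
  · exfalso
    subst hμ0
    have hbot : commutator G = ⊥ := Subgroup.card_eq_one.mp (by simpa using hcard)
    apply hnonab
    intro x y
    induction x using QuotientGroup.induction_on with | H a =>
    induction y using QuotientGroup.induction_on with | H b =>
    rw [← QuotientGroup.mk_mul, ← QuotientGroup.mk_mul]
    have hab : ⁅a, b⁆ ∈ commutator G := by
      rw [commutator_def]
      exact Subgroup.commutator_mem_commutator (Subgroup.mem_top a) (Subgroup.mem_top b)
    rw [hbot, Subgroup.mem_bot, commutatorElement_def] at hab
    have : a * b = b * a := by
      have := congrArg (· * (b * a)) hab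
      simpa [mul_assoc] using this
    rw [this]
  -- get a generator c of the commutator subgroup
  obtain ⟨⟨c, hcmem⟩, hgen⟩ := hcyc.exists_generator
  have hzc : Subgroup.zpowers c = commutator G := by
    apply le_antisymm (Subgroup.zpowers_le.mpr hcmem)
    intro g hg
    obtain ⟨n, hn⟩ := hgen ⟨g, hg⟩
    rw [Subgroup.mem_zpowers_iff]
    exact ⟨n, by have := congrArg Subtype.val hn; simpa using this⟩
  have hordc : orderOf c = 3 ^ μ := by
    rw [← Nat.card_zpowers, hzc, hcard]
  have hdvd : ∀ a : ℤ, c ^ a = 1 → ((3:ℤ) ^ μ) ∣ a := by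
    intro a ha
    have := orderOf_dvd_iff_zpow_eq_one.mpr ha
    rw [hordc] at this
    exact_mod_cast this
  -- K = zpowers (c^3)
  have hpow3 : ∀ j : ℤ, (c ^ 3) ^ j = c ^ (3 * j) := by
    intro j
    rw [← zpow_natCast c 3, ← zpow_mul]
    norm_num
  have hc3mem : c ^ 3 ∈ Subgroup.zpowers c :=
    Subgroup.mem_zpowers_iff.mpr ⟨(3:ℤ), by rw [← zpow_natCast c 3]; norm_num⟩
  have hKz : K = Subgroup.zpowers (c ^ 3) := by
    rw [hK]
    apply le_antisymm
    · rw [Subgroup.closure_le]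
      rintro _ ⟨g, hg, rfl⟩
      dsimp only
      have hg' : g ∈ Subgroup.zpowers c := by rw [hzc]; exact hg
      obtain ⟨n, rfl⟩ := Subgroup.mem_zpowers_iff.mp hg'
      rw [SetLike.mem_coe, Subgroup.mem_zpowers_iff]
      refine ⟨n, ?_⟩
      rw [hpow3, ← zpow_natCast (c ^ n) 3, ← zpow_mul]
      congr 1
      push_cast
      ring
    · rw [Subgroup.zpowers_le]
      exact Subgroup.subset_closure ⟨c, hcmem, rfl⟩
  -- conjugation exponents
  have hconj : ∀ x : G, ∃ k : ℤ, x * c * x⁻¹ = c ^ k ∧ (3:ℤ) ∣ k - 1 := by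
    intro x
    have hmem : x * c * x⁻¹ ∈ Subgroup.zpowers c := by
      rw [hzc]; exact hGnorm.conj_mem c hcmem x
    obtain ⟨k, hk⟩ := Subgroup.mem_zpowers_iff.mp hmem
    refine ⟨k, hk.symm, ?_⟩
    obtain ⟨e, he⟩ := h3 x
    have hiter : ∀ n : ℕ, x ^ n * c * (x ^ n)⁻¹ = c ^ (k ^ n) := by
      intro n
      induction n with
      | zero => simp
      | succ n ih =>
        have h1 : x ^ (n+1) * c * (x ^ (n+1))⁻¹ = x * (x ^ n * c * (x ^ n)⁻¹) * x⁻¹ := by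
          group
        rw [h1, ih, ← conj_zpow, hk.symm, ← zpow_mul]
        congr 1
        rw [pow_succ]
        ring
    have h1 : c ^ (k ^ 3 ^ e) = c := by
      have := hiter (3 ^ e)
      rw [he] at this
      simpa using this.symm
    have h2 : c ^ (k ^ 3 ^ e - 1) = 1 := by
      rw [zpow_sub, h1, zpow_one, mul_inv_cancel]
    have h3μ := hdvd _ h2
    have h3d : (3:ℤ) ∣ k ^ 3 ^ e - 1 :=
      dvd_trans (dvd_pow_self 3 (by omega : μ ≠ 0)) h3μ
    have := fermat k e
    omega
  -- cards
  have hcardK : Nat.card K = 3 ^ (μ - 1) := by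
    have hpow : (3:ℕ) ^ μ = 3 ^ (μ - 1) * 3 := by
      rw [← pow_succ]
      congr 1
      omega
    rw [hKz, Nat.card_zpowers, orderOf_pow, hordc]
    have hgcd : Nat.gcd (3 ^ μ) 3 = 3 := Nat.gcd_eq_right ⟨3 ^ (μ - 1), by omega⟩
    rw [hgcd, hpow]
    exact Nat.mul_div_cancel _ (by norm_num)
  have hcardG : Nat.card G = 27 * 3 ^ (μ - 1) := by
    rw [Subgroup.card_eq_card_quotient_mul_card_subgroup K, hcard27, hcardK]
  have hcardA : Nat.card (G ⧸ commutator G) = 9 := by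
    have h1 := Subgroup.card_eq_card_quotient_mul_card_subgroup (commutator G)
    rw [hcard, hcardG] at h1
    have hpow : (3:ℕ) ^ μ = 3 ^ (μ - 1) * 3 := by
      rw [← pow_succ]; congr 1; omega
    have hpos : 0 < 3 ^ (μ - 1) := Nat.pow_pos (by norm_num)
    rw [hpow] at h1
    nlinarith [h1]
  -- the natural map G/K → G/G'
  have hKle : K ≤ commutator G := by
    rw [hKz, ← hzc]
    exact Subgroup.zpowers_le.mpr hc3mem
  set f : G ⧸ K →* G ⧸ commutator G :=
    QuotientGroup.map K (commutator G) (MonoidHom.id G)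
      (by rw [Subgroup.comap_id]; exact hKle) with hf
  have hker : f.ker ≤ Subgroup.center (G ⧸ K) := by
    intro q hq
    induction q using QuotientGroup.induction_on with | H g =>
    rw [MonoidHom.mem_ker, hf, QuotientGroup.map_mk, MonoidHom.id_apply,
      QuotientGroup.eq_one_iff] at hq
    rw [Subgroup.mem_center_iff]
    intro q'
    induction q' using QuotientGroup.induction_on with | H h =>
    rw [← QuotientGroup.mk_mul, ← QuotientGroup.mk_mul, QuotientGroup.eq]
    have hg' : g ∈ Subgroup.zpowers c := by rw [hzc]; exact hq
    obtain ⟨j, rfl⟩ := Subgroup.mem_zpowers_iff.mp hg'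
    obtain ⟨k, hk, hk3⟩ := hconj h⁻¹
    rw [inv_inv] at hk
    obtain ⟨b, hb⟩ := hk3
    have hcj : h⁻¹ * c ^ j * h = c ^ (k * j) := by
      have : (h⁻¹ * c * (h⁻¹)⁻¹) ^ j = h⁻¹ * c ^ j * (h⁻¹)⁻¹ := conj_zpow
      rw [inv_inv] at this
      rw [← this, hk, ← zpow_mul]
    have hexpr : (h * c ^ j)⁻¹ * (c ^ j * h) = c ^ (j * (k - 1)) := by
      have h1 : (h * c ^ j)⁻¹ * (c ^ j * h) = c ^ (-j) * (h⁻¹ * c ^ j * h) := by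
        rw [zpow_neg]
        group
      rw [h1, hcj, ← zpow_add]
      congr 1
      ring
    rw [hexpr, hKz]
    rw [Subgroup.mem_zpowers_iff]
    refine ⟨j * b, ?_⟩
    rw [hpow3]
    congr 1
    rw [hb]
    ring
  have hnotcyc : ¬ IsCyclic (G ⧸ commutator G) := by
    intro hA
    exact hnonab fun a b => commutative_of_cyclic_center_quotient f hker a b
  -- every cube lies in the commutator subgroup
  have expo3 : ∀ g : G, g ^ 3 ∈ commutator G := by
    intro g
    have h9 : orderOf (QuotientGroup.mk g : G ⧸ commutator G) ∣ 9 :=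
      hcardA ▸ orderOf_dvd_natCard _
    have hne : orderOf (QuotientGroup.mk g : G ⧸ commutator G) ≠ 9 := by
      intro h
      exact hnotcyc (isCyclic_of_orderOf_eq_card _ (by rw [h, hcardA]))
    have hdvd3 : orderOf (QuotientGroup.mk g : G ⧸ commutator G) ∣ 3 := by
      rcases (Nat.dvd_prime_pow Nat.prime_three).mp
        (by simpa using h9 : orderOf (QuotientGroup.mk g : G ⧸ commutator G) ∣ 3 ^ 2)
        with ⟨i, hi, hieq⟩
      interval_cases i <;> simp_all
    have hpow1 : (QuotientGroup.mk g : G ⧸ commutator G) ^ 3 = 1 :=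
      orderOf_dvd_iff_pow_eq_one.mp hdvd3
    rwa [← QuotientGroup.mk_pow, QuotientGroup.eq_one_iff] at hpow1
  -- main step : μ ≥ 2 impossible
  have hμ1 : μ = 1 := by
    by_contra hμne
    have hμ2 : 2 ≤ μ := by omega
    have h9μ : (9:ℤ) ∣ 3 ^ μ := by
      refine ⟨3 ^ (μ - 2), ?_⟩
      rw [show μ = 2 + (μ - 2) by omega, pow_add]
      norm_num
    -- some commutator is not in K
    have hex : ∃ x y : G, ⁅x, y⁆ ∉ K := by
      by_contra hall
      push_neg at hall
      have hle : commutator G ≤ K := by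
        rw [commutator_def, Subgroup.commutator_le]
        intro g _ h _
        exact hall g h
      have hcK : c ∈ Subgroup.zpowers (c ^ 3) := by
        rw [← hKz]; exact hle hcmem
      obtain ⟨j, hj⟩ := Subgroup.mem_zpowers_iff.mp hcK
      rw [hpow3] at hj
      have h1 : c ^ (3 * j - 1) = 1 := by
        rw [zpow_sub, hj, zpow_one, mul_inv_cancel]
      have h2 := hdvd _ h1
      have h3' : (3:ℤ) ∣ 3 * j - 1 :=
        dvd_trans (dvd_pow_self 3 (by omega : μ ≠ 0)) h2
      omega
    -- key contradiction lemma
    have key : ∀ z w : G, ⁅z, w⁆ ∉ K → ∀ kz : ℤ, z * c * z⁻¹ = c ^ kz →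
        (9:ℤ) ∣ kz - 1 → False := by
      intro z w hzw kz hkz h9z
      obtain ⟨kw, hkw, hkw3⟩ := hconj w
      have hmemzw : ⁅z, w⁆ ∈ Subgroup.zpowers c := by
        rw [hzc, commutator_def]
        exact Subgroup.commutator_mem_commutator (Subgroup.mem_top z) (Subgroup.mem_top w)
      obtain ⟨m, hm⟩ := Subgroup.mem_zpowers_iff.mp hmemzw
      have hm3 : ¬ (3:ℤ) ∣ m := by
        rintro ⟨j, hj⟩
        apply hzw
        rw [hKz, Subgroup.mem_zpowers_iff]
        refine ⟨j, ?_⟩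
        rw [hpow3, ← hj, hm]
      obtain ⟨t, ht⟩ := Subgroup.mem_zpowers_iff.mp
        (show w ^ 3 ∈ Subgroup.zpowers c by rw [hzc]; exact expo3 w)
      have e1 : z * w ^ 3 * z⁻¹ * (w ^ 3)⁻¹ = c ^ (t * (kz - 1)) := by
        rw [← ht]
        have h1 : z * c ^ t * z⁻¹ = (z * c * z⁻¹) ^ t := conj_zpow.symm
        rw [h1, hkz, ← zpow_mul, ← zpow_neg, ← zpow_add]
        congr 1
        ring
      have hw : ∀ j : ℤ, w * c ^ j * w⁻¹ = c ^ (kw * j) := by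
        intro j
        rw [← conj_zpow, hkw, ← zpow_mul]
      have hzw' : z * w * z⁻¹ = c ^ m * w := by
        rw [hm, commutatorElement_def]
        group
      have e2 : z * w ^ 3 * z⁻¹ * (w ^ 3)⁻¹ = c ^ (m + kw * m + kw * (kw * m)) := by
        have h3c : ∀ a : G, a ^ 3 = a * a * a := fun a => by rw [pow_succ, pow_succ, pow_one]
        calc z * w ^ 3 * z⁻¹ * (w ^ 3)⁻¹
            = (z * w * z⁻¹) ^ 3 * (w ^ 3)⁻¹ := by rw [conj_pow]
          _ = (c ^ m * w) ^ 3 * (w ^ 3)⁻¹ := by rw [hzw']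
          _ = c ^ m * (w * c ^ m * w⁻¹) * (w * (w * c ^ m * w⁻¹) * w⁻¹) := by
              rw [h3c, h3c]
              group
          _ = c ^ m * c ^ (kw * m) * (w * c ^ (kw * m) * w⁻¹) := by rw [hw m]
          _ = c ^ m * c ^ (kw * m) * c ^ (kw * (kw * m)) := by rw [hw (kw * m)]
          _ = c ^ (m + kw * m + kw * (kw * m)) := by rw [← zpow_add, ← zpow_add]
      have heq : c ^ (m + kw * m + kw * (kw * m) - t * (kz - 1)) = 1 := by
        rw [zpow_sub, ← e2, ← e1]
        group
      obtain ⟨D, hD⟩ := hdvd _ heq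
      obtain ⟨s, hs⟩ := h9z
      obtain ⟨b, hb⟩ := hkw3
      have hkz' : kz = 1 + 9 * s := by omega
      have hkw' : kw = 1 + 3 * b := by omega
      subst hkz' hkw'
      rw [show (3:ℤ) ^ μ = 9 * 3 ^ (μ - 2) by
        rw [show μ = 2 + (μ - 2) by omega, pow_add]; norm_num] at hD
      have h9m : (9:ℤ) ∣ 3 * m :=
        ⟨3 ^ (μ - 2) * D + t * s - b * m - b * b * m, by linear_combination hD⟩
      omega
    obtain ⟨x, y, hxy⟩ := hex
    obtain ⟨kx, hkx, hkx3⟩ := hconj x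
    obtain ⟨ky, hky, hky3⟩ := hconj y
    obtain ⟨kyi, hkyi, hkyi3⟩ := hconj y⁻¹
    rw [inv_inv] at hkyi
    -- ky * kyi ≡ 1
    have hrel : c ^ (ky * kyi - 1) = 1 := by
      have h1 : c = c ^ (ky * kyi) := by
        calc c = y * (y⁻¹ * c * y) * y⁻¹ := by group
          _ = y * c ^ kyi * y⁻¹ := by rw [hkyi]
          _ = (y * c * y⁻¹) ^ kyi := conj_zpow.symm
          _ = c ^ (ky * kyi) := by rw [hky, ← zpow_mul]
      rw [zpow_sub, ← h1, zpow_one, mul_inv_cancel]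
    obtain ⟨E, hE⟩ := hdvd _ hrel
    have h9rel : (9:ℤ) ∣ ky * kyi - 1 := hE ▸ Dvd.dvd.mul_right h9μ E
    by_cases h1 : (9:ℤ) ∣ kx - 1
    · exact key x y hxy kx hkx h1
    by_cases h2 : (9:ℤ) ∣ ky - 1
    · refine key y x ?_ ky hky h2
      intro hmemyx
      apply hxy
      have := K.inv_mem hmemyx
      rwa [commutatorElement_inv] at this
    by_cases h3' : (9:ℤ) ∣ kx * ky - 1
    · have hc1 : (x * y) * c * (x * y)⁻¹ = c ^ (kx * ky) := by
        calc (x * y) * c * (x * y)⁻¹ = x * (y * c * y⁻¹) * x⁻¹ := by group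
          _ = x * c ^ ky * x⁻¹ := by rw [hky]
          _ = (x * c * x⁻¹) ^ ky := conj_zpow.symm
          _ = c ^ (kx * ky) := by rw [hkx, ← zpow_mul]
      have hcom : ⁅x * y, y⁆ = ⁅x, y⁆ := by
        simp only [commutatorElement_def]
        try group
      exact key (x * y) y (by rwa [hcom]) _ hc1 h3'
    · -- arithmetic: kx * kyi ≡ 1 mod 9
      have key9 : ∀ a b bi : ZMod 9, ((a = 1 ∨ a = 4 ∨ a = 7) ∧ (b = 1 ∨ b = 4 ∨ b = 7) ∧
          a ≠ 1 ∧ b ≠ 1 ∧ a * b ≠ 1 ∧ b * bi = 1) → a * bi = 1 := by decide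
      have tri : ∀ v : ZMod 9, 1 + 3 * v = 1 ∨ 1 + 3 * v = 4 ∨ 1 + 3 * v = 7 := by decide
      have cast1 : ∀ k : ℤ, (3:ℤ) ∣ k - 1 →
          ((k : ZMod 9) = 1 ∨ (k : ZMod 9) = 4 ∨ (k : ZMod 9) = 7) := by
        intro k hdv
        obtain ⟨j, hj⟩ := hdv
        have hk : k = 1 + 3 * j := by omega
        rw [hk]
        push_cast
        exact tri (j : ZMod 9)
      have castne : ∀ k : ℤ, ¬ (9:ℤ) ∣ k - 1 → (k : ZMod 9) ≠ 1 := by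
        intro k hk h
        apply hk
        have h1' : ((k:ℤ) : ZMod 9) = ((1:ℤ) : ZMod 9) := by push_cast; exact h
        have h2' := (ZMod.intCast_eq_intCast_iff_dvd_sub k 1 9).mp h1'
        have h3'' : (9:ℤ) ∣ 1 - k := by exact_mod_cast h2'
        omega
      have hab : (kx : ZMod 9) * (ky : ZMod 9) ≠ 1 := by
        intro h
        apply h3'
        have h1' : ((kx * ky : ℤ) : ZMod 9) = ((1:ℤ) : ZMod 9) := by push_cast; exact h
        have h2' := (ZMod.intCast_eq_intCast_iff_dvd_sub (kx * ky) 1 9).mp h1'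
        have h3'' : (9:ℤ) ∣ 1 - kx * ky := by exact_mod_cast h2'
        rw [show kx * ky - 1 = -(1 - kx * ky) by ring]
        exact dvd_neg.mpr h3''
      have hbbi : (ky : ZMod 9) * (kyi : ZMod 9) = 1 := by
        have h1' : ((ky * kyi : ℤ) : ZMod 9) = ((1:ℤ) : ZMod 9) := by
          refine (ZMod.intCast_eq_intCast_iff_dvd_sub (ky * kyi) 1 9).mpr ?_
          have : (9:ℤ) ∣ 1 - ky * kyi := by
            rw [show (1 - ky * kyi : ℤ) = -(ky * kyi - 1) by ring]
            exact dvd_neg.mpr h9rel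
          exact_mod_cast this
        push_cast at h1'
        exact h1'
      have hres := key9 (kx : ZMod 9) (ky : ZMod 9) (kyi : ZMod 9)
        ⟨cast1 kx hkx3, cast1 ky hky3, castne kx h1, castne ky h2, hab, hbbi⟩
      have h9' : (9:ℤ) ∣ kx * kyi - 1 := by
        have h1' : ((kx * kyi : ℤ) : ZMod 9) = ((1:ℤ) : ZMod 9) := by push_cast; exact hres
        have h2' := (ZMod.intCast_eq_intCast_iff_dvd_sub (kx * kyi) 1 9).mp h1'
        have h3'' : (9:ℤ) ∣ 1 - kx * kyi := by exact_mod_cast h2'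
        rw [show kx * kyi - 1 = -(1 - kx * kyi) by ring]
        exact dvd_neg.mpr h3''
      have hc1 : (x * y⁻¹) * c * (x * y⁻¹)⁻¹ = c ^ (kx * kyi) := by
        calc (x * y⁻¹) * c * (x * y⁻¹)⁻¹ = x * (y⁻¹ * c * y) * x⁻¹ := by group
          _ = x * c ^ kyi * x⁻¹ := by rw [hkyi]
          _ = (x * c * x⁻¹) ^ kyi := conj_zpow.symm
          _ = c ^ (kx * kyi) := by rw [hkx, ← zpow_mul]
      have hcom : ⁅x * y⁻¹, y⁆ = ⁅x, y⁆ := by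
        simp only [commutatorElement_def]
        try group
      exact key (x * y⁻¹) y (by rwa [hcom]) _ hc1 h9'
  refine ⟨hμ1, ?_⟩
  rw [hcardG, hμ1]
  norm_num
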